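/- Let $K$ be a non-empty compact Hausdorff space and let $P\colon C(K)\to C(K)$ be a positive projection with $P\mathbb{1}_K=\mathbb{1}_K$. Suppose $\alpha\ge 0$ satisfies: (i) $\alpha\,\mathrm{id}_{C(K)}\le P$, and (ii) whenever $f\in C(K)_+$ is such that the multiplication operator $M_f$ satisfies $0\le M_f\le P$, then $\|f\|_\infty\le\alpha$. Then either $\alpha=0$ or $\alpha=1/n$ for some positive integer $n$. -/

import Mathlib

set_option linter.unusedSectionVars false
set_option maxHeartbeats 1000000

open Set

namespace Stmt5Aux

variable {K : Type*} [TopologicalSpace K] [CompactSpace K] [T2Space K]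

/-- The equivalence relation: same evaluation of all `P g`. -/
def Rel (P : C(K, ℝ) →ₗ[ℝ] C(K, ℝ)) (x y : K) : Prop := ∀ g : C(K, ℝ), P g x = P g y

theorem Rel.rfl (P : C(K, ℝ) →ₗ[ℝ] C(K, ℝ)) (x : K) : Rel P x x := fun _ => _root_.rfl

theorem Rel.symm {P : C(K, ℝ) →ₗ[ℝ] C(K, ℝ)} {x y : K} (h : Rel P x y) : Rel P y x :=
  fun g => (h g).symm

theorem Rel.trans {P : C(K, ℝ) →ₗ[ℝ] C(K, ℝ)} {x y z : K} (h : Rel P x y) (h' : Rel P y z) :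
    Rel P x z := fun g => (h g).trans (h' g)

variable (P : C(K, ℝ) →ₗ[ℝ] C(K, ℝ))

/-- the set of values `P g x` over admissible bumps at `x` -/
def cSet (x : K) : Set ℝ := {r | ∃ g : C(K, ℝ), 0 ≤ g ∧ g x = 1 ∧ P g x = r}

/-- atom mass function -/
noncomputable def cfn (x : K) : ℝ := sInf (cSet P x)

variable {P}

theorem pmono (hpos : ∀ f : C(K, ℝ), 0 ≤ f → 0 ≤ P f) {g h : C(K, ℝ)} (hgh : g ≤ h) :
    P g ≤ P h := by
  have h1 := hpos (h - g) (by simpa using hgh)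
  have h2 : P h - P g = P (h - g) := by rw [map_sub]
  have h3 : 0 ≤ P h - P g := h2 ▸ h1
  exact sub_nonneg.mp h3

theorem papp_nonneg (hpos : ∀ f : C(K, ℝ), 0 ≤ f → 0 ≤ P f) {g : C(K, ℝ)} (hg : 0 ≤ g)
    (x : K) : 0 ≤ P g x := ContinuousMap.le_def.1 (hpos g hg) x

theorem cSet_nonempty (hunit : P 1 = 1) (x : K) : (cSet P x).Nonempty :=
  ⟨1, 1, zero_le_one, ContinuousMap.one_apply x, by rw [hunit]; rfl⟩

theorem cSet_bddBelow (hpos : ∀ f : C(K, ℝ), 0 ≤ f → 0 ≤ P f) (x : K) :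
    BddBelow (cSet P x) := by
  refine ⟨0, fun r hr => ?_⟩
  obtain ⟨g, hg0, -, rfl⟩ := hr
  exact papp_nonneg hpos hg0 x

theorem cfn_le (hpos : ∀ f : C(K, ℝ), 0 ≤ f → 0 ≤ P f) {x : K} {g : C(K, ℝ)}
    (hg0 : 0 ≤ g) (hg1 : g x = 1) : cfn P x ≤ P g x :=
  csInf_le (cSet_bddBelow hpos x) ⟨g, hg0, hg1, _root_.rfl⟩

theorem alpha_le_cfn {α : ℝ} (hunit : P 1 = 1)
    (hdom : ∀ f : C(K, ℝ), 0 ≤ f → α • f ≤ P f) (x : K) : α ≤ cfn P x := by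
  refine le_csInf (cSet_nonempty hunit x) ?_
  rintro r ⟨g, hg0, hg1, rfl⟩
  have := ContinuousMap.le_def.1 (hdom g hg0) x
  simpa [hg1] using this

theorem cfn_mul_le (hpos : ∀ f : C(K, ℝ), 0 ≤ f → 0 ≤ P f) {g : C(K, ℝ)} (hg : 0 ≤ g)
    (x : K) : cfn P x * g x ≤ P g x := by
  rcases eq_or_lt_of_le (ContinuousMap.le_def.1 hg x) with h0 | h0
  · rw [← h0]; simpa using papp_nonneg hpos hg x
  · set t : ℝ := g x with ht
    have h0' : (0:ℝ) < t := by simpa using h0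
    have hg' : (0:C(K,ℝ)) ≤ t⁻¹ • g := smul_nonneg (inv_nonneg.2 h0'.le) hg
    have hg'1 : (t⁻¹ • g) x = 1 := by
      simp [ContinuousMap.smul_apply, inv_mul_cancel₀ (ne_of_gt h0')]
      exact inv_mul_cancel₀ (ne_of_gt h0')
    have := cfn_le hpos hg' hg'1
    rw [map_smul] at this
    have h2 : (t⁻¹ • P g) x = t⁻¹ * P g x := _root_.rfl
    rw [h2] at this
    calc cfn P x * t ≤ (t⁻¹ * P g x) * t := by
          exact mul_le_mul_of_nonneg_right this (le_of_lt h0')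
      _ = P g x := by
          rw [mul_comm t⁻¹, mul_assoc, inv_mul_cancel₀ (ne_of_gt h0'), mul_one]

/-- fixed points are closed under squaring (needs `α > 0`). -/
theorem fix_sq {α : ℝ} (hα : 0 < α)
    (hproj : ∀ f, P (P f) = P f)
    (hpos : ∀ f : C(K, ℝ), 0 ≤ f → 0 ≤ P f)
    (hunit : P 1 = 1)
    (hdom : ∀ f : C(K, ℝ), 0 ≤ f → α • f ≤ P f)
    {a : C(K, ℝ)} (ha : P a = a) : P (a * a) = a * a := by
  -- Kadison-Schwarz pointwise
  have KS : ∀ x : K, (a x) ^ 2 ≤ P (a * a) x := by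
    intro x
    set t : ℝ := a x with ht
    have hsq : (0:C(K,ℝ)) ≤ (a - t • 1) * (a - t • 1) := by
      rw [ContinuousMap.le_def]; intro y; simpa using mul_self_nonneg ((a - t • 1) y)
    have hP := papp_nonneg hpos hsq x
    have expand : (a - t • 1) * (a - t • 1) = a * a - (2*t) • a + (t^2) • (1:C(K,ℝ)) := by
      ext y; simp [ContinuousMap.smul_apply, ContinuousMap.sub_apply, ContinuousMap.mul_apply]
      ring
    rw [expand] at hP
    rw [map_add, map_sub, map_smul, map_smul, hunit] at hP
    have hPa : P a x = t := by rw [ha]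
    simp only [ContinuousMap.add_apply, ContinuousMap.sub_apply, ContinuousMap.smul_apply,
      ContinuousMap.one_apply, smul_eq_mul, mul_one] at hP
    rw [hPa] at hP
    nlinarith
  set q : C(K, ℝ) := P (a * a) - a * a with hq
  have hq0 : 0 ≤ q := by
    rw [ContinuousMap.le_def]; intro y
    have := KS y
    simp only [hq, ContinuousMap.sub_apply, ContinuousMap.mul_apply, ContinuousMap.zero_apply]
    nlinarith
  have hPq : P q = 0 := by
    rw [hq, map_sub, hproj]; simp
  have := hdom q hq0
  rw [hPq] at this
  have hle : ∀ y, q y = 0 := by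
    intro y
    have h1 := ContinuousMap.le_def.1 this y
    have h2 := ContinuousMap.le_def.1 hq0 y
    simp only [ContinuousMap.smul_apply, ContinuousMap.zero_apply, smul_eq_mul] at h1 h2 ⊢
    nlinarith
  have : q = 0 := by ext y; simpa using hle y
  have := sub_eq_zero.mp (by rw [← hq]; exact this)
  exact this

/-- Support lemma: nonnegative `g` vanishing on the class of `x` has `P g x = 0`. -/
theorem support_lemma {α : ℝ} (hα : 0 < α)
    (hproj : ∀ f, P (P f) = P f)
    (hpos : ∀ f : C(K, ℝ), 0 ≤ f → 0 ≤ P f)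
    (hunit : P 1 = 1)
    (hdom : ∀ f : C(K, ℝ), 0 ≤ f → α • f ≤ P f)
    (x : K) {g : C(K, ℝ)} (hg : 0 ≤ g) (hv : ∀ y, Rel P x y → g y = 0) :
    P g x = 0 := by
  have hge : 0 ≤ P g x := papp_nonneg hpos hg x
  have key : ∀ ε : ℝ, 0 < ε → P g x ≤ ε := by
    intro ε hε
    set S : Set K := {z | ε ≤ g z} with hS
    have hScl : IsClosed S := isClosed_le continuous_const g.continuous
    have hScpt : IsCompact S := hScl.isCompact
    have hz : ∀ z : K, ∃ h : C(K, ℝ),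
        P h = h ∧ 0 ≤ h ∧ h x = 0 ∧ (z ∈ S → 0 < h z) := by
      intro z
      by_cases hzS : z ∈ S
      · have hnR : ¬ Rel P x z := by
          intro hR
          have h1 := hv z hR
          have h2 : ε ≤ g z := hzS
          rw [h1] at h2; linarith
        rw [Rel] at hnR; push_neg at hnR
        obtain ⟨f, hf⟩ := hnR
        set a : C(K, ℝ) := P f - (P f x) • 1 with ha
        have hPa : P a = a := by
          rw [ha, map_sub, map_smul, hproj, hunit]
        refine ⟨a * a, fix_sq hα hproj hpos hunit hdom hPa, ?_, ?_, fun _ => ?_⟩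
        · rw [ContinuousMap.le_def]; intro y
          simpa using mul_self_nonneg (a y)
        · simp [ha]
        · have haz : a z ≠ 0 := by
            simp only [ha, ContinuousMap.sub_apply, ContinuousMap.smul_apply,
              ContinuousMap.one_apply, smul_eq_mul, mul_one]
            exact sub_ne_zero.2 (Ne.symm hf)
          have : 0 < a z * a z := mul_self_pos.2 haz
          simpa [ContinuousMap.mul_apply] using this
      · exact ⟨0, by simp, le_refl _, _root_.rfl, fun h => absurd h hzS⟩
    choose h hfix hh0 hhx hhz using hz
    have hcover : S ⊆ ⋃ z : K, {w | 0 < h z w} := by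
      intro z hzS
      exact mem_iUnion.2 ⟨z, hhz z hzS⟩
    obtain ⟨t, ht⟩ := hScpt.elim_finite_subcover (fun z => {w | 0 < h z w})
      (fun z => isOpen_lt continuous_const (h z).continuous) hcover
    set q : C(K, ℝ) := ∑ z ∈ t, h z with hqdef
    have hq0 : 0 ≤ q := Finset.sum_nonneg (fun z _ => hh0 z)
    have hqx : q x = 0 := by
      rw [hqdef, ContinuousMap.sum_apply]
      exact Finset.sum_eq_zero (fun z _ => hhx z)
    have hPq : P q = q := by
      rw [hqdef, map_sum]
      exact Finset.sum_congr _root_.rfl (fun z _ => hfix z)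
    have hqposS : ∀ w ∈ S, 0 < q w := by
      intro w hw
      obtain ⟨z, hzt, hzw⟩ := by
        have := ht hw
        simpa using this
      rw [hqdef, ContinuousMap.sum_apply]
      exact Finset.sum_pos' (fun i _ => ContinuousMap.le_def.1 (hh0 i) w) ⟨z, hzt, hzw⟩
    rcases S.eq_empty_or_nonempty with hSe | hSne
    · have hgε : g ≤ ε • (1:C(K,ℝ)) := by
        rw [ContinuousMap.le_def]; intro w
        have : w ∉ S := by rw [hSe]; exact notMem_empty w
        have : ¬ ε ≤ g w := this
        simp only [ContinuousMap.smul_apply, ContinuousMap.one_apply, smul_eq_mul, mul_one]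
        linarith
      have := ContinuousMap.le_def.1 (pmono hpos hgε) x
      rw [map_smul, hunit] at this
      simpa using this
    · obtain ⟨z₀, hz₀S, hmin⟩ := hScpt.exists_isMinOn hSne q.continuous.continuousOn
      set δ : ℝ := q z₀ with hδ
      have hδpos : 0 < δ := hqposS z₀ hz₀S
      have hbound : g ≤ ε • (1:C(K,ℝ)) + (‖g‖/δ) • q := by
        rw [ContinuousMap.le_def]; intro w
        simp only [ContinuousMap.add_apply, ContinuousMap.smul_apply, ContinuousMap.one_apply,
          smul_eq_mul, mul_one]
        by_cases hw : w ∈ S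
        · have h1 : δ ≤ q w := hmin hw
          have h2 : g w ≤ ‖g‖ := g.apply_le_norm w
          have h3 : 0 ≤ ‖g‖ := norm_nonneg g
          have : ‖g‖ ≤ ‖g‖/δ * q w := by
            rw [div_mul_eq_mul_div, le_div_iff₀ hδpos]
            exact mul_le_mul_of_nonneg_left h1 h3
          linarith
        · have h1 : g w < ε := by
            have : ¬ ε ≤ g w := hw
            linarith
          have h2 : 0 ≤ q w := ContinuousMap.le_def.1 hq0 w
          have h3 : 0 ≤ ‖g‖/δ := div_nonneg (norm_nonneg g) hδpos.le
          nlinarith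
      have := ContinuousMap.le_def.1 (pmono hpos hbound) x
      rw [map_add, map_smul, map_smul, hunit, hPq] at this
      simp only [ContinuousMap.add_apply, ContinuousMap.smul_apply, ContinuousMap.one_apply,
        smul_eq_mul, mul_one] at this
      rw [hqx] at this
      linarith
  by_contra hne
  have hgt : 0 < P g x := lt_of_le_of_ne hge (Ne.symm hne)
  have := key (P g x / 2) (by linarith)
  linarith

/-- disjoint neighborhoods and subordinate bump functions for a finite set -/
theorem exists_bumps (S : Finset K) : ∃ (U : K → Set K) (b : K → C(K, ℝ)),
    (∀ y, y ∈ U y ∧ IsOpen (U y)) ∧ (↑S : Set K).PairwiseDisjoint U ∧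
    (∀ y, 0 ≤ b y ∧ b y ≤ 1 ∧ (b y) y = 1 ∧ ∀ w, w ∉ U y → (b y) w = 0) := by
  obtain ⟨U, hU, hdisj⟩ := (S.finite_toSet).t2_separation
  have hb : ∀ y : K, ∃ b : C(K, ℝ),
      0 ≤ b ∧ b ≤ 1 ∧ b y = 1 ∧ ∀ w, w ∉ U y → b w = 0 := by
    intro y
    obtain ⟨f, hf0, hf1, hficc⟩ := exists_continuous_zero_one_of_isClosed
      ((hU y).2.isClosed_compl) (isClosed_singleton (x := y))
      (by
        rw [Set.disjoint_left]; intro a ha hay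
        rw [Set.mem_singleton_iff] at hay
        exact ha (hay ▸ (hU y).1))
    refine ⟨f, ?_, ?_, hf1 (mem_singleton y), fun w hw => ?_⟩
    · rw [ContinuousMap.le_def]; intro w
      simpa using (hficc w).1
    · rw [ContinuousMap.le_def]; intro w
      simpa using (hficc w).2
    · simpa using hf0 hw
  choose b hb0 hb1 hby hbv using hb
  exact ⟨U, b, hU, hdisj, fun y => ⟨hb0 y, hb1 y, hby y, hbv y⟩⟩

/-- finitely many equivalent points: `k·α ≤ 1` -/
theorem card_mul_le_one {α : ℝ}
    (hpos : ∀ f : C(K, ℝ), 0 ≤ f → 0 ≤ P f)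
    (hunit : P 1 = 1)
    (hdom : ∀ f : C(K, ℝ), 0 ≤ f → α • f ≤ P f)
    (x : K) (S : Finset K) (hS : ∀ y ∈ S, Rel P x y) :
    (S.card : ℝ) * α ≤ 1 := by
  obtain ⟨U, b, hU, hdisj, hb⟩ := exists_bumps S
  have hsum : (∑ y ∈ S, b y) ≤ 1 := by
    rw [ContinuousMap.le_def]; intro w
    rw [ContinuousMap.sum_apply]
    have h1w : (1 : C(K, ℝ)) w = 1 := _root_.rfl
    rw [h1w]
    by_cases hex : ∃ y ∈ S, w ∈ U y
    · obtain ⟨y₀, hy₀, hwy₀⟩ := hex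
      have heq : ∑ y ∈ S, (b y) w = (b y₀) w := by
        refine Finset.sum_eq_single_of_mem y₀ hy₀ (fun y hy hne => ?_)
        refine (hb y).2.2.2 w ?_
        intro hwy
        exact Set.disjoint_left.1 (hdisj (by exact_mod_cast hy) (by exact_mod_cast hy₀) hne)
          hwy hwy₀
      rw [heq]
      exact ContinuousMap.le_def.1 (hb y₀).2.1 w
    · push_neg at hex
      have : ∑ y ∈ S, (b y) w = 0 :=
        Finset.sum_eq_zero (fun y hy => (hb y).2.2.2 w (hex y hy))
      rw [this]; norm_num
  have each : ∀ y ∈ S, α ≤ P (b y) x := by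
    intro y hy
    have h1 := ContinuousMap.le_def.1 (hdom (b y) (hb y).1) y
    simp only [ContinuousMap.smul_apply, smul_eq_mul] at h1
    rw [(hb y).2.2.1, mul_one] at h1
    rw [hS y hy (b y)]
    exact h1
  calc (S.card : ℝ) * α = ∑ _y ∈ S, α := by rw [Finset.sum_const, nsmul_eq_mul]
    _ ≤ ∑ y ∈ S, P (b y) x := Finset.sum_le_sum each
    _ = P (∑ y ∈ S, b y) x := by rw [map_sum, ContinuousMap.sum_apply]
    _ ≤ P 1 x := ContinuousMap.le_def.1 (pmono hpos hsum) x
    _ = 1 := by rw [hunit]; rfl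

/-- sum of atom masses over a full class is at least 1 -/
theorem one_le_sum_cfn {α : ℝ} (hα : 0 < α)
    (hproj : ∀ f, P (P f) = P f)
    (hpos : ∀ f : C(K, ℝ), 0 ≤ f → 0 ≤ P f)
    (hunit : P 1 = 1)
    (hdom : ∀ f : C(K, ℝ), 0 ≤ f → α • f ≤ P f)
    (x : K) (S : Finset K) (hSiff : ∀ y, y ∈ S ↔ Rel P x y)
    {ε : ℝ} (hε : 0 < ε) :
    1 ≤ ∑ y ∈ S, (cfn P y + ε) := by
  have hch : ∀ y : K, ∃ g : C(K, ℝ), 0 ≤ g ∧ g y = 1 ∧ P g y < cfn P y + ε := by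
    intro y
    have hlt : sInf (cSet P y) < cfn P y + ε := by
      have : cfn P y = sInf (cSet P y) := _root_.rfl
      linarith [this]
    obtain ⟨r, hrmem, hrlt⟩ := exists_lt_of_csInf_lt (cSet_nonempty hunit y) hlt
    obtain ⟨g, h0, h1, he⟩ := hrmem
    exact ⟨g, h0, h1, he ▸ hrlt⟩
  choose g hg0 hg1 hglt using hch
  set G : C(K, ℝ) := ∑ y ∈ S, g y with hG
  set r : C(K, ℝ) := (1 - G) ⊔ 0 with hr
  have hr0 : (0 : C(K, ℝ)) ≤ r := le_sup_right
  have hrv : ∀ y, Rel P x y → r y = 0 := by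
    intro y hy
    have hyS : y ∈ S := (hSiff y).2 hy
    have hGy : (1 : ℝ) ≤ G y := by
      rw [hG, ContinuousMap.sum_apply]
      calc (1:ℝ) = (g y) y := (hg1 y).symm
        _ ≤ ∑ y' ∈ S, (g y') y :=
          Finset.single_le_sum (fun i _ => ContinuousMap.le_def.1 (hg0 i) y) hyS
    have : r y = max ((1 - G) y) 0 := _root_.rfl
    rw [this]
    have : (1 - G) y = 1 - G y := by simp
    rw [this, max_eq_right (by linarith)]
  have hone : (1 : C(K, ℝ)) ≤ G + r := by
    rw [ContinuousMap.le_def]; intro w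
    have h1 : r w = max ((1:ℝ) - G w) 0 := by
      have : (1 - G) w = 1 - G w := by simp
      rw [hr]; show max ((1-G) w) 0 = _; rw [this]
    have h2 : (1:ℝ) - G w ≤ r w := by rw [h1]; exact le_max_left _ _
    have h3 : (G + r) w = G w + r w := _root_.rfl
    have h4 : (1 : C(K,ℝ)) w = 1 := _root_.rfl
    rw [h3, h4]; linarith
  have hPr : P r x = 0 := support_lemma hα hproj hpos hunit hdom x hr0 hrv
  have hmain := ContinuousMap.le_def.1 (pmono hpos hone) x
  rw [hunit, map_add] at hmain
  have h5 : (1 : C(K,ℝ)) x = 1 := _root_.rfl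
  have h6 : (P G + P r) x = P G x + P r x := _root_.rfl
  rw [h5, h6, hPr] at hmain
  have h7 : P G x = ∑ y ∈ S, P (g y) x := by rw [hG, map_sum, ContinuousMap.sum_apply]
  have h8 : ∀ y ∈ S, P (g y) x ≤ cfn P y + ε := by
    intro y hy
    have := (hSiff y).1 hy (g y)
    rw [this]
    exact (hglt y).le
  calc (1:ℝ) ≤ P G x + 0 := by linarith
    _ = ∑ y ∈ S, P (g y) x := by rw [add_zero, h7]
    _ ≤ ∑ y ∈ S, (cfn P y + ε) := Finset.sum_le_sum h8

/-- lower bound for cfn at points whose class meets `U` only in themselves -/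
theorem pg_le_cfn {α : ℝ} (hα : 0 < α)
    (hproj : ∀ f, P (P f) = P f)
    (hpos : ∀ f : C(K, ℝ), 0 ≤ f → 0 ≤ P f)
    (hunit : P 1 = 1)
    (hdom : ∀ f : C(K, ℝ), 0 ≤ f → α • f ≤ P f)
    {z : K} {U : Set K} {g : C(K, ℝ)}
    (hg0 : 0 ≤ g) (hg1 : g ≤ 1) (hgv : ∀ w, w ∉ U → g w = 0)
    (huniq : ∀ y, Rel P z y → y ∈ U → y = z) :
    P g z ≤ cfn P z := by
  refine le_csInf (cSet_nonempty hunit z) ?_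
  rintro r ⟨h, hh0, hh1, rfl⟩
  set rr : C(K, ℝ) := (g - h) ⊔ 0 with hrr
  have hrr0 : (0 : C(K, ℝ)) ≤ rr := le_sup_right
  have happ : ∀ w, rr w = max (g w - h w) 0 := by
    intro w
    have : (g - h) w = g w - h w := _root_.rfl
    rw [hrr]; show max ((g - h) w) 0 = _; rw [this]
  have hrrv : ∀ y, Rel P z y → rr y = 0 := by
    intro y hy
    rw [happ]
    by_cases hyU : y ∈ U
    · have hyz : y = z := huniq y hy hyU
      subst hyz
      have : g y ≤ 1 := ContinuousMap.le_def.1 hg1 y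
      rw [hh1, max_eq_right (by linarith)]
    · rw [hgv y hyU]
      have : 0 ≤ h y := ContinuousMap.le_def.1 hh0 y
      rw [max_eq_right (by linarith)]
  have hle : g ≤ h + rr := by
    rw [ContinuousMap.le_def]; intro w
    have h1 : (h + rr) w = h w + rr w := _root_.rfl
    rw [h1, happ]
    have := le_max_left (g w - h w) 0
    linarith
  have hPrr : P rr z = 0 := support_lemma hα hproj hpos hunit hdom z hrr0 hrrv
  have := ContinuousMap.le_def.1 (pmono hpos hle) z
  rw [map_add] at this
  have h2 : (P h + P rr) z = P h z + P rr z := _root_.rfl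
  rw [h2, hPrr] at this
  linarith

end Stmt5Aux

open Stmt5Aux Set

/-- Main theorem: if `P` is a positive unital projection on `C(K)`, `K` a
non-empty compact Hausdorff space, `α • id ≤ P`, and every multiplication
operator `M_f` with `0 ≤ M_f ≤ P` satisfies `‖f‖ ≤ α`, then `α = 0` or
`α = 1/n` for some positive integer `n`. -/
theorem stmt5 {K : Type*} [TopologicalSpace K] [CompactSpace K] [T2Space K]
    [Nonempty K]
    (P : C(K, ℝ) →ₗ[ℝ] C(K, ℝ))
    (hproj : ∀ f, P (P f) = P f)
    (hpos : ∀ f : C(K, ℝ), 0 ≤ f → 0 ≤ P f)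
    (hunit : P 1 = 1)
    (α : ℝ) (hα : 0 ≤ α)
    (hdom : ∀ f : C(K, ℝ), 0 ≤ f → α • f ≤ P f)
    (hmax : ∀ f : C(K, ℝ), 0 ≤ f → (∀ g : C(K, ℝ), 0 ≤ g → f * g ≤ P g) → ‖f‖ ≤ α) :
    α = 0 ∨ ∃ n : ℕ, 0 < n ∧ α = 1 / n := by
  classical
  rcases eq_or_lt_of_le hα with h0 | hα'
  · exact Or.inl h0.symm
  right
  obtain ⟨n₀, hn₀⟩ := exists_nat_gt (1/α)
  -- classes are finite
  have hcard : ∀ (x : K) (t : Finset K), (∀ y ∈ t, Rel P x y) → (t.card : ℝ) * α ≤ 1 :=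
    fun x t ht => card_mul_le_one hpos hunit hdom x t ht
  have hfin : ∀ x : K, {y | Rel P x y}.Finite := by
    intro x
    by_contra hinf
    rw [← Set.not_infinite, not_not] at hinf
    obtain ⟨t, htsub, htcard⟩ := Set.Infinite.exists_subset_card_eq hinf (n₀+1)
    have h1 := hcard x t (fun y hy => htsub hy)
    rw [htcard] at h1
    have h2 : (1:ℝ)/α < n₀ := hn₀
    rw [div_lt_iff₀ hα'] at h2
    push_cast at h1
    nlinarith
  set kc : K → ℕ := fun x => ({y | Rel P x y}).ncard with hkc
  have hkcval : ∀ x : K, ((hfin x).toFinset.card : ℕ) = kc x := by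
    intro x
    rw [hkc]
    exact (Set.ncard_eq_toFinset_card _ (hfin x)).symm
  have hkbd : ∀ x, kc x ≤ n₀ := by
    intro x
    have h1 := hcard x (hfin x).toFinset (fun y hy => ((hfin x).mem_toFinset).1 hy)
    rw [hkcval x] at h1
    by_contra hgt
    push_neg at hgt
    have h2 : (1:ℝ)/α < n₀ := hn₀
    rw [div_lt_iff₀ hα'] at h2
    have h3 : (n₀ : ℝ) ≤ (kc x : ℝ) := by exact_mod_cast hgt.le
    nlinarith
  set T : Set ℕ := Set.range kc with hT
  have hTne : T.Nonempty := ⟨kc (Classical.arbitrary K), ⟨_, rfl⟩⟩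
  have hTbdd : BddAbove T := ⟨n₀, by rintro m ⟨x, rfl⟩; exact hkbd x⟩
  set kstar : ℕ := sSup T with hkstar
  obtain ⟨xs, hxs⟩ : ∃ x, kc x = kstar := Nat.sSup_mem hTne hTbdd
  have hksmax : ∀ z : K, kc z ≤ kstar := fun z => le_csSup hTbdd ⟨z, rfl⟩
  set Sstar : Finset K := (hfin xs).toFinset with hSstar
  have hSmem : ∀ y, y ∈ Sstar ↔ Rel P xs y := fun y => (hfin xs).mem_toFinset
  have hScard : Sstar.card = kstar := by rw [hkcval xs] at *; exact hxs ▸ hkcval xs ▸ rfl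
  obtain ⟨U, b, hU, hdisj, hb⟩ := exists_bumps Sstar
  set A : Set K := (⋃ w ∈ Sstar, U w)ᶜ with hA
  have hAclosed : IsClosed A := (isOpen_biUnion (fun w _ => (hU w).2)).isClosed_compl
  obtain ⟨gA, hgA0, hgA1, hgAicc⟩ := exists_continuous_zero_one_of_isClosed
    (Sstar.finite_toSet.isClosed) hAclosed
    (by
      rw [Set.disjoint_left]
      intro y hy hyA
      exact hyA (Set.mem_biUnion hy (hU y).1))
  have hgAnn : (0:C(K,ℝ)) ≤ gA := by
    rw [ContinuousMap.le_def]; intro w; simpa using (hgAicc w).1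
  have hgAcls : ∀ y, Rel P xs y → gA y = 0 := by
    intro y hy
    have : y ∈ Sstar := (hSmem y).2 hy
    simpa using hgA0 this
  have hPgAxs : P gA xs = 0 := support_lemma hα' hproj hpos hunit hdom xs hgAnn hgAcls
  -- the good neighborhood of each class point
  set W : Set K := {z | P gA z < α} ∩ (⋂ w ∈ Sstar, {z | 0 < P (b w) z}) with hW
  have hWopen : IsOpen W := by
    apply IsOpen.inter
    · exact isOpen_lt (P gA).continuous continuous_const
    · exact isOpen_biInter_finset (fun w _ => isOpen_lt continuous_const (P (b w)).continuous)
  have hWmem : ∀ y₁ ∈ Sstar, y₁ ∈ W := by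
    intro y₁ hy₁
    have hRel1 : Rel P xs y₁ := (hSmem y₁).1 hy₁
    constructor
    · show P gA y₁ < α
      rw [← hRel1 gA, hPgAxs]
      exact hα'
    · rw [Set.mem_iInter₂]
      intro w hw
      show 0 < P (b w) y₁
      have hRw : Rel P y₁ w := hRel1.symm.trans ((hSmem w).1 hw)
      rw [hRw (b w)]
      have h1 := cfn_mul_le hpos (hb w).1 w
      rw [(hb w).2.2.1, mul_one] at h1
      have h2 := alpha_le_cfn hunit hdom (P := P) w
      linarith
  -- uniqueness of class point inside U y₁, for z ∈ W ∩ U y₁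
  have huniq : ∀ y₁ ∈ Sstar, ∀ z ∈ W, z ∈ U y₁ →
      ∀ y, Rel P z y → y ∈ U y₁ → y = z := by
    intro y₁ hy₁ z hzW hzU y hyRel hyU
    obtain ⟨hz1, hz2⟩ := hzW
    -- class of z is inside the union
    have hclsub : ∀ y', Rel P z y' → y' ∈ ⋃ w ∈ Sstar, U w := by
      intro y' hy'
      by_contra hyA
      have h1 : cfn P y' * gA y' ≤ P gA y' := cfn_mul_le hpos hgAnn y'
      have h2 : gA y' = 1 := by simpa using hgA1 hyA
      have h3 := alpha_le_cfn hunit hdom (P := P) y'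
      rw [h2, mul_one] at h1
      have h4 : P gA z = P gA y' := hy' gA
      have h5 : P gA z < α := hz1
      linarith
    -- class of z meets each U w
    have hmeets : ∀ w, w ∈ Sstar → ∃ y', Rel P z y' ∧ y' ∈ U w := by
      intro w hw
      by_contra hno
      push_neg at hno
      have hvan : ∀ y', Rel P z y' → (b w) y' = 0 :=
        fun y' hy' => (hb w).2.2.2 y' (hno y' hy')
      have := support_lemma hα' hproj hpos hunit hdom z (hb w).1 hvan
      have h2 : 0 < P (b w) z := by
        have := Set.mem_iInter₂.1 hz2 w hw
        exact this
      linarith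
    have hmeets' : ∀ w : K, ∃ y', w ∈ Sstar → (Rel P z y' ∧ y' ∈ U w) := by
      intro w
      by_cases hw : w ∈ Sstar
      · obtain ⟨y', h1, h2⟩ := hmeets w hw
        exact ⟨y', fun _ => ⟨h1, h2⟩⟩
      · exact ⟨z, fun h => absurd h hw⟩
    choose p hp using hmeets'
    set Tz : Finset K := (hfin z).toFinset with hTz
    have hTzmem : ∀ y', y' ∈ Tz ↔ Rel P z y' := fun y' => (hfin z).mem_toFinset
    have himsub : Sstar.image p ⊆ Tz := by
      intro y' hy'
      obtain ⟨w, hw, rfl⟩ := Finset.mem_image.1 hy'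
      exact (hTzmem _).2 (hp w hw).1
    have hinj : Set.InjOn p ↑Sstar := by
      intro w hw w' hw' heq
      by_contra hne
      have h1 : p w ∈ U w := (hp w (by exact_mod_cast hw)).2
      have h2 : p w' ∈ U w' := (hp w' (by exact_mod_cast hw')).2
      rw [heq] at h1
      exact Set.disjoint_left.1 (hdisj hw hw' hne) h1 h2
    have hcardim : (Sstar.image p).card = kstar := by
      rw [Finset.card_image_of_injOn hinj, hScard]
    have hTzcard : Tz.card ≤ kstar := by
      rw [hkcval z]  -- Tz.card = kc z ... careful: hkcval gives toFinset.card = kc z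
      exact hksmax z
    have him : Sstar.image p = Tz := by
      apply Finset.eq_of_subset_of_card_le himsub
      rw [hcardim]; exact hTzcard
    -- now conclude
    have hyTz : y ∈ Tz := (hTzmem y).2 hyRel
    have hzTz : z ∈ Tz := (hTzmem z).2 (Rel.rfl P z)
    rw [← him] at hyTz hzTz
    obtain ⟨w, hw, hwy⟩ := Finset.mem_image.1 hyTz
    obtain ⟨w', hw', hwz⟩ := Finset.mem_image.1 hzTz
    have hwyU : y ∈ U w := hwy ▸ (hp w hw).2
    have hwzU : z ∈ U w' := hwz ▸ (hp w' hw').2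
    have hwe : w = y₁ := by
      by_contra hne
      exact Set.disjoint_left.1 (hdisj (by exact_mod_cast hw) (by exact_mod_cast hy₁) hne) hwyU hyU
    have hwe' : w' = y₁ := by
      by_contra hne
      exact Set.disjoint_left.1 (hdisj (by exact_mod_cast hw') (by exact_mod_cast hy₁) hne) hwzU hzU
    rw [← hwy, ← hwz, hwe, hwe']
  -- each class point has cfn = α
  have hcfn_eq : ∀ y₁ ∈ Sstar, cfn P y₁ = α := by
    intro y₁ hy₁
    have hy₁W : y₁ ∈ W := hWmem y₁ hy₁
    set b₁ : C(K, ℝ) := b y₁ with hb₁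
    set β : ℝ := P b₁ y₁ with hβ
    have hcβ : cfn P y₁ ≤ β := cfn_le hpos (hb y₁).1 (hb y₁).2.2.1
    have hkey : ∀ ε : ℝ, 0 < ε → β ≤ α + ε := by
      intro ε hε
      by_cases hβε : β - ε ≤ 0
      · linarith
      push_neg at hβε
      set Wε : Set K := (W ∩ U y₁) ∩ {z | β - ε < P b₁ z} with hWε
      have hWεopen : IsOpen Wε :=
        ((hWopen.inter (hU y₁).2).inter (isOpen_lt continuous_const (P b₁).continuous))
      have hy₁Wε : y₁ ∈ Wε := by
        refine ⟨⟨hy₁W, (hU y₁).1⟩, ?_⟩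
        show β - ε < P b₁ y₁
        rw [← hβ]; linarith
      obtain ⟨φ, hφ0, hφ1, hφicc⟩ := exists_continuous_zero_one_of_isClosed
        (isClosed_compl_iff.2 hWεopen) (isClosed_singleton (x := y₁))
        (by
          rw [Set.disjoint_left]
          intro a ha hay
          rw [Set.mem_singleton_iff] at hay
          exact ha (hay ▸ hy₁Wε))
      set f : C(K, ℝ) := (β - ε) • φ with hf
      have hf0 : (0:C(K,ℝ)) ≤ f := by
        rw [ContinuousMap.le_def]; intro w
        have := (hφicc w).1
        have : (0:ℝ) ≤ (β - ε) * φ w := mul_nonneg (by linarith) this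
        simpa [hf, ContinuousMap.smul_apply] using this
      have hfc : ∀ x : K, f x ≤ cfn P x := by
        intro x
        by_cases hx : x ∈ Wε
        · obtain ⟨⟨hxW, hxU⟩, hxβ⟩ := hx
          have huq : ∀ y, Rel P x y → y ∈ U y₁ → y = x := huniq y₁ hy₁ x hxW hxU
          have hlow : P b₁ x ≤ cfn P x :=
            pg_le_cfn hα' hproj hpos hunit hdom (hb y₁).1 (hb y₁).2.1
              (fun w hw => (hb y₁).2.2.2 w hw) huq
          have hβx : β - ε < P b₁ x := hxβ
          have hφle : φ x ≤ 1 := by simpa using (hφicc x).2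
          have hfx : f x ≤ β - ε := by
            have : (β - ε) * φ x ≤ (β - ε) * 1 :=
              mul_le_mul_of_nonneg_left hφle (by linarith)
            simpa [hf, ContinuousMap.smul_apply] using this
          linarith
        · have hφx : φ x = 0 := by simpa using hφ0 hx
          have hfx : f x = 0 := by simp [hf, ContinuousMap.smul_apply, hφx]
          rw [hfx]
          have := alpha_le_cfn hunit hdom (P := P) x
          linarith
      have hnorm : ‖f‖ ≤ α := by
        refine hmax f hf0 (fun g hg => ?_)
        rw [ContinuousMap.le_def]; intro w
        have h1 : (f * g) w = f w * g w := _root_.rfl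
        rw [h1]
        have h2 : f w * g w ≤ cfn P w * g w :=
          mul_le_mul_of_nonneg_right (hfc w) (ContinuousMap.le_def.1 hg w)
        have h3 := cfn_mul_le hpos hg w
        linarith
      have hfy₁ : f y₁ = β - ε := by
        have : φ y₁ = 1 := hφ1 (mem_singleton y₁)
        simp [hf, ContinuousMap.smul_apply, this]
      have := f.apply_le_norm y₁
      rw [hfy₁] at this
      linarith
    have hβα : β ≤ α := le_of_forall_pos_le_add hkey
    have := alpha_le_cfn hunit hdom (P := P) y₁
    linarith
  -- conclusion
  have hkspos : 0 < kstar := by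
    rw [← hxs, hkc]
    refine Set.ncard_pos (hfin xs) |>.2 ⟨xs, Rel.rfl P xs⟩
  have hge : 1 ≤ (kstar : ℝ) * α := by
    refine le_of_forall_pos_le_add ?_
    intro ε hε
    have hε' : 0 < ε / kstar := div_pos hε (by exact_mod_cast hkspos)
    have h1 := one_le_sum_cfn hα' hproj hpos hunit hdom xs Sstar hSmem hε'
    have h2 : ∑ y ∈ Sstar, (cfn P y + ε / kstar) = (kstar:ℝ) * α + ε := by
      rw [Finset.sum_congr _root_.rfl (fun y hy => by rw [hcfn_eq y hy])]
      rw [Finset.sum_const, hScard, nsmul_eq_mul]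
      have : (kstar:ℝ) ≠ 0 := by exact_mod_cast hkspos.ne'
      field_simp
    rw [h2] at h1
    exact h1
  have hle : (kstar : ℝ) * α ≤ 1 := by
    have := hcard xs Sstar (fun y hy => (hSmem y).1 hy)
    rwa [hScard] at this
  have heq : (kstar : ℝ) * α = 1 := le_antisymm hle hge
  refine ⟨kstar, hkspos, ?_⟩
  have : (kstar:ℝ) ≠ 0 := by exact_mod_cast hkspos.ne'
  field_simp
  linarith [heq]
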